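/- A pair (Q, L) consisting of a nondegenerate quadratic form Q and a nonzero linear form L on ℝ^d is of type (I) (equivalent to (x₁²+…+x_s²−x_{s+1}²−…−x_d², x_d)) if and only if Q + αL² is degenerate for some α ∈ ℝ. -/

import Mathlib

/-- Two pairs of (quadratic form, linear form) on `ℝ^d` are equivalent if they agree up to
a linear change of coordinates `g ∈ GL(d,ℝ)` and independent nonzero scalings. -/
def PairEquiv (d : ℕ) (Q₁ L₁ Q₂ L₂ : (Fin d → ℝ) → ℝ) : Prop :=
  ∃ (lam mu : ℝ) (g : (Fin d → ℝ) ≃ₗ[ℝ] (Fin d → ℝ)), lam ≠ 0 ∧ mu ≠ 0 ∧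
    ∀ x, Q₁ x = lam * Q₂ (g x) ∧ L₁ x = mu * L₂ (g x)

/-- Canonical quadratic form of type (I) with signature parameter `s`. -/
def canQI (d s : ℕ) : (Fin d → ℝ) → ℝ :=
  fun x => ∑ i : Fin d, (if (i : ℕ) < s then 1 else -1) * x i ^ 2

/-- Canonical linear form `x_d`. -/
def canL (d : ℕ) : (Fin d → ℝ) → ℝ :=
  fun x => if h : 0 < d then x ⟨d - 1, by omega⟩ else 0

open QuadraticMap Finset Module

lemma polar_addsq {m : Type*} [AddCommGroup m] [Module ℝ m]
    (Q : QuadraticForm ℝ m) (L : m →ₗ[ℝ] ℝ) (α : ℝ) (x y : m) :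
    polar (fun z => Q z + α * (L z) ^ 2) x y
      = polar (⇑Q) x y + α * (2 * L x * L y) := by
  simp only [polar, map_add]
  ring

lemma exists_perm_threshold {n : ℕ} (P : Fin n → Prop) [DecidablePred P] :
    ∃ σ : Equiv.Perm (Fin n),
      ∀ i : Fin n, P (σ i) ↔ (i : ℕ) < (Finset.univ.filter P).card := by
  classical
  set v : Fin n → ℕ := fun i => if P i then 0 else 1 with hv
  set σ := Tuple.sort v with hσ
  have mono := Tuple.monotone_sort v
  refine ⟨σ, ?_⟩
  have hlow : ∀ j i : Fin n, j ≤ i → P (σ i) → P (σ j) := by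
    intro j i hji hi
    have h1 : v (σ j) ≤ v (σ i) := mono hji
    have h2 : v (σ i) = 0 := if_pos hi
    by_contra hj
    have h3 : v (σ j) = 1 := if_neg hj
    omega
  set A : Finset (Fin n) := Finset.univ.filter (fun i => P (σ i)) with hA
  have hcard : A.card = (Finset.univ.filter P).card := by
    have himg : A.image σ = Finset.univ.filter P := by
      ext j
      simp only [Finset.mem_image, hA, Finset.mem_filter, Finset.mem_univ, true_and]
      constructor
      · rintro ⟨i, hi, rfl⟩; exact hi
      · intro hj; exact ⟨σ.symm j, by simpa using hj, σ.apply_symm_apply j⟩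
    rw [← himg, Finset.card_image_of_injective _ σ.injective]
  intro i
  constructor
  · intro hi
    have hsub : Finset.Iic i ⊆ A := by
      intro j hj
      simp only [Finset.mem_Iic] at hj
      simp only [hA, Finset.mem_filter, Finset.mem_univ, true_and]
      exact hlow j i hj hi
    have hc := Finset.card_le_card hsub
    rw [Fin.card_Iic] at hc
    omega
  · intro hi
    by_contra hni
    have hsub : A ⊆ Finset.Iio i := by
      intro j hj
      simp only [hA, Finset.mem_filter, Finset.mem_univ, true_and] at hj
      simp only [Finset.mem_Iio]
      by_contra hji
      exact hni (hlow i j (le_of_not_gt hji) hj)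
    have hc := Finset.card_le_card hsub
    rw [Fin.card_Iio] at hc
    omega

lemma diag_exists {n : ℕ} (Q' : QuadraticForm ℝ (Fin n → ℝ))
    (hnd : ∀ x : Fin n → ℝ, (∀ y, polar (⇑Q') x y = 0) → x = 0) :
    ∃ w : Fin n → ℝ, (∀ i, w i = -1 ∨ w i = 1) ∧
      ∃ F : (Fin n → ℝ) ≃ₗ[ℝ] (Fin n → ℝ), ∀ y, Q' (F y) = ∑ i, w i * (y i) ^ 2 := by
  have hsep : (QuadraticMap.associated (R := ℝ) Q').SeparatingLeft := by
    intro x hx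
    apply hnd
    intro y
    have h := QuadraticMap.two_nsmul_associated ℝ Q'
    have h2 : polar (⇑Q') x y = 2 • ((QuadraticMap.associatedHom ℝ Q') x y) := by
      rw [← polarBilin_apply_apply, ← h]; simp only [LinearMap.smul_apply]
    rw [h2]
    have : (QuadraticMap.associatedHom ℝ Q') x y = 0 := hx y
    rw [this]; simp
  obtain ⟨w, hw, ⟨f⟩⟩ := Q'.equivalent_one_neg_one_weighted_sum_squared hsep
  have hfr : finrank ℝ (Fin n → ℝ) = n := Module.finrank_fin_fun ℝ
  set e : Fin n ≃ Fin (finrank ℝ (Fin n → ℝ)) := finCongr hfr.symm with he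
  refine ⟨fun j => w (e j), fun j => hw (e j), ?_⟩
  set G : (Fin n → ℝ) ≃ₗ[ℝ] (Fin (finrank ℝ (Fin n → ℝ)) → ℝ) :=
    LinearEquiv.funCongrLeft ℝ ℝ e.symm with hG
  refine ⟨G ≪≫ₗ f.toLinearEquiv.symm, fun y => ?_⟩
  have h1 : Q' ((G ≪≫ₗ f.toLinearEquiv.symm) y)
      = weightedSumSquares ℝ w (G y) := by
    exact f.symm.map_app (G y)
  rw [h1]
  rw [weightedSumSquares_apply]
  have h2 : ∀ i, (G y) i = y (e.symm i) := fun i => rfl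
  calc ∑ i, w i • ((G y) i * (G y) i)
      = ∑ i, w i * (y (e.symm i)) ^ 2 := by
        refine Finset.sum_congr rfl fun i _ => ?_
        rw [h2]; rw [smul_eq_mul]; ring
    _ = ∑ j, w (e j) * (y j) ^ 2 := by
        refine (Fintype.sum_equiv e _ _ fun j => ?_).symm
        rw [e.symm_apply_apply]

noncomputable def splitLast (n : ℕ) : (Fin (n + 1) → ℝ) ≃ₗ[ℝ] (Fin n → ℝ) × ℝ where
  toFun x := (Fin.init x, x (Fin.last n))
  invFun p := Fin.snoc p.1 p.2
  map_add' x y := by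
    refine Prod.ext ?_ rfl
    funext i
    simp [Fin.init]
  map_smul' c x := by
    refine Prod.ext ?_ rfl
    funext i
    simp [Fin.init]
  left_inv x := by simp
  right_inv p := by simp

lemma canL_eq (n : ℕ) (z : Fin (n + 1) → ℝ) : canL (n + 1) z = z (Fin.last n) := by
  simp [canL, Fin.last]

lemma canQI_polar (d s : ℕ) (u v : Fin d → ℝ) :
    canQI d s (u + v) - canQI d s u - canQI d s v
      = ∑ i : Fin d, (if (i : ℕ) < s then (1:ℝ) else -1) * (2 * u i * v i) := by
  simp only [canQI]
  rw [← Finset.sum_sub_distrib, ← Finset.sum_sub_distrib]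
  refine Finset.sum_congr rfl fun i _ => ?_
  simp only [Pi.add_apply]
  ring

/-- A pair `(Q, L)` (with `Q` nondegenerate, `L ≠ 0`) is of type (I) iff `Q + αL²` is
degenerate for some `α ∈ ℝ`. -/
theorem stmt_6 (d : ℕ) (hd : 0 < d)
    (Q : QuadraticForm ℝ (Fin d → ℝ))
    (hQnd : ∀ x : Fin d → ℝ, (∀ y, QuadraticMap.polar Q x y = 0) → x = 0)
    (L : (Fin d → ℝ) →ₗ[ℝ] ℝ) (hL : L ≠ 0) :
    (∃ s : ℕ, 1 ≤ s ∧ s ≤ d ∧ PairEquiv d (⇑Q) (⇑L) (canQI d s) (canL d)) ↔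
      (∃ α : ℝ, ∃ x : Fin d → ℝ, x ≠ 0 ∧
        ∀ y, QuadraticMap.polar (fun z => Q z + α * (L z) ^ 2) x y = 0) := by
  obtain ⟨n, rfl⟩ : ∃ n, d = n + 1 := ⟨d - 1, by omega⟩
  constructor
  · rintro ⟨s, hs1, hs2, lam, mu, g, hlam, hmu, hQL⟩
    set ι : Fin (n + 1) := Fin.last n with hιdef
    set ε : ℝ := if (n : ℕ) < s then 1 else -1 with hε
    have hεval : ε = if ((ι : ℕ)) < s then (1:ℝ) else -1 := by
      rw [hε, hιdef, Fin.val_last]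
    refine ⟨-(lam * ε) / mu ^ 2, g.symm (Pi.single ι 1 : Fin (n+1) → ℝ), ?_, ?_⟩
    · intro h0
      have h1 : (Pi.single ι (1:ℝ) : Fin (n+1) → ℝ) = 0 := by
        have h2 := congrArg g h0
        rw [g.apply_symm_apply, map_zero] at h2
        exact h2
      have h3 := congrFun h1 ι
      simp at h3
    · intro y
      rw [polar_addsq]
      set x := g.symm (Pi.single ι 1 : Fin (n+1) → ℝ) with hx
      have hgx : g x = Pi.single ι 1 := g.apply_symm_apply _
      have hQ3 : polar ⇑Q x y = lam * (ε * (2 * 1 * (g y ι))) := by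
        have e1 : Q (x + y) = lam * canQI (n+1) s (g x + g y) := by
          rw [(hQL (x + y)).1, map_add]
        have e2 : Q x = lam * canQI (n+1) s (g x) := (hQL x).1
        have e3 : Q y = lam * canQI (n+1) s (g y) := (hQL y).1
        have e4 := canQI_polar (n+1) s (g x) (g y)
        have e5 : ∑ i : Fin (n+1), (if (i : ℕ) < s then (1:ℝ) else -1)
            * (2 * (g x) i * (g y) i) = ε * (2 * 1 * (g y ι)) := by
          rw [hgx]
          rw [Finset.sum_eq_single ι]
          · rw [Pi.single_eq_same, ← hεval]
          · intro b _ hb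
            rw [Pi.single_eq_of_ne hb]; ring
          · intro hb; exact absurd (Finset.mem_univ ι) hb
        have : polar ⇑Q x y = Q (x + y) - Q x - Q y := rfl
        rw [this, e1, e2, e3, ← e5, ← e4]
        ring
      have hLx : L x = mu * 1 := by
        rw [(hQL x).2, canL_eq, ← hιdef, hgx, Pi.single_eq_same]
      have hLy : L y = mu * (g y ι) := by
        rw [(hQL y).2, canL_eq, ← hιdef]
      rw [hQ3, hLx, hLy]
      field_simp
      ring
  · rintro ⟨α, x₀, hx₀, hpol⟩
    classical
    have K : ∀ y, polar ⇑Q x₀ y = -(α * (2 * L x₀ * L y)) := by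
      intro y
      have h := hpol y
      rw [polar_addsq] at h
      linarith
    have hα : α ≠ 0 := by
      intro h; apply hx₀; apply hQnd; intro y; rw [K y, h]; ring
    have hLx₀ : L x₀ ≠ 0 := by
      intro h; apply hx₀; apply hQnd; intro y; rw [K y, h]; ring
    have hQx0 : Q x₀ = -α * (L x₀) ^ 2 := by
      have h1 := K x₀
      have h2 : polar ⇑Q x₀ x₀ = Q x₀ + Q x₀ := by
        rw [QuadraticMap.polar_self, two_nsmul]
      rw [h2] at h1
      linear_combination h1 / 2
    have hQx0ne : Q x₀ ≠ 0 := by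
      rw [hQx0]
      exact mul_ne_zero (neg_ne_zero.mpr hα) (pow_ne_zero 2 hLx₀)
    set r : ℝ := Real.sqrt |Q x₀| with hr
    have hrpos : 0 < r := Real.sqrt_pos.mpr (abs_pos.mpr hQx0ne)
    have hr2 : r ^ 2 = |Q x₀| := Real.sq_sqrt (abs_nonneg _)
    set x₁ : Fin (n+1) → ℝ := r⁻¹ • x₀ with hx₁
    have habs : |Q x₀| ≠ 0 := abs_ne_zero.mpr hQx0ne
    have hQx1 : Q x₁ = Q x₀ / |Q x₀| := by
      have hrne : r ≠ 0 := ne_of_gt hrpos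
      rw [hx₁, QuadraticMap.map_smul, smul_eq_mul, ← hr2]
      field_simp
    have hx1pm : Q x₁ = 1 ∨ Q x₁ = -1 := by
      rcases lt_or_gt_of_ne hQx0ne with h | h
      · right; rw [hQx1, abs_of_neg h, div_neg, div_self hQx0ne]
      · left; rw [hQx1, abs_of_pos h, div_self hQx0ne]
    have hQx1ne : Q x₁ ≠ 0 := by rcases hx1pm with h | h <;> rw [h] <;> norm_num
    have hLx1 : L x₁ ≠ 0 := by
      rw [hx₁, _root_.map_smul, smul_eq_mul]
      exact mul_ne_zero (inv_ne_zero (ne_of_gt hrpos)) hLx₀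
    have hker1 : ∀ y, L y = 0 → polar ⇑Q x₁ y = 0 := by
      intro y hy
      rw [hx₁, QuadraticMap.polar_smul_left, K y, hy, smul_eq_mul]
      ring
    have hrange : LinearMap.range L = ⊤ := by
      rw [LinearMap.range_eq_top]
      intro c
      exact ⟨(c / L x₀) • x₀, by rw [_root_.map_smul, smul_eq_mul]; field_simp⟩
    have hkerrank : finrank ℝ (LinearMap.ker L) = n := by
      have h1 := LinearMap.finrank_range_add_finrank_ker L
      rw [hrange, finrank_top, Module.finrank_self, Module.finrank_fin_fun] at h1
      omega
    have hκeq : finrank ℝ (Fin n → ℝ) = finrank ℝ ↥(LinearMap.ker L) := by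
      rw [hkerrank, Module.finrank_fin_fun]
    set κ : (Fin n → ℝ) ≃ₗ[ℝ] ↥(LinearMap.ker L) := LinearEquiv.ofFinrankEq _ _ hκeq with hκ
    set ι : (Fin n → ℝ) →ₗ[ℝ] (Fin (n+1) → ℝ) :=
      (LinearMap.ker L).subtype ∘ₗ (κ : (Fin n → ℝ) →ₗ[ℝ] ↥(LinearMap.ker L)) with hι
    have hιapp : ∀ a, ι a = ((κ a : Fin (n+1) → ℝ)) := fun a => rfl
    have hιker : ∀ a, L (ι a) = 0 := fun a => LinearMap.mem_ker.mp (κ a).2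
    have hιinj : Function.Injective ι := by
      intro a b hab
      apply κ.injective
      exact Subtype.ext hab
    set Q' : QuadraticForm ℝ (Fin n → ℝ) := Q.comp ι with hQ'
    have hQI : ∀ a, Q' a = Q (ι a) := fun a => rfl
    have hQ'polar : ∀ a b, polar ⇑Q' a b = polar ⇑Q (ι a) (ι b) := by
      intro a b
      simp only [polar, hQI, map_add]
    have decomp : ∀ y : Fin (n+1) → ℝ, ∃ (b : Fin n → ℝ) (t : ℝ), y = ι b + t • x₁ := by
      intro y
      have hmem : y - (L y / L x₁) • x₁ ∈ LinearMap.ker L := by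
        rw [LinearMap.mem_ker, _root_.map_sub, _root_.map_smul, smul_eq_mul]
        field_simp
        ring
      refine ⟨κ.symm ⟨y - (L y / L x₁) • x₁, hmem⟩, L y / L x₁, ?_⟩
      rw [hιapp, κ.apply_symm_apply]
      simp
    have hQ'nd : ∀ a, (∀ b, polar ⇑Q' a b = 0) → a = 0 := by
      intro a ha
      have h0 : ι a = 0 := by
        apply hQnd
        intro y
        obtain ⟨b, t, rfl⟩ := decomp y
        rw [QuadraticMap.polar_add_right, QuadraticMap.polar_smul_right]
        rw [← hQ'polar, ha b]
        have hz : polar ⇑Q (ι a) x₁ = 0 := by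
          rw [polar_comm]; exact hker1 (ι a) (hιker a)
        rw [hz]; simp
      apply hιinj
      rw [h0, map_zero]
    obtain ⟨w, hw, F, hF⟩ := diag_exists Q' hQ'nd
    set P : Fin n → Prop := fun i => w i = -Q x₁ with hP
    obtain ⟨σ, hσ⟩ := exists_perm_threshold P
    set p := (Finset.univ.filter P).card with hp
    have hpn : p ≤ n := by
      have := Finset.card_filter_le Finset.univ P
      simpa using this
    have hwv : ∀ i, w i = Q x₁ ∨ w i = -Q x₁ := by
      intro i
      rcases hw i with h | h <;> rcases hx1pm with h1 | h1 <;> rw [h, h1] <;> norm_num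
    set lam : ℝ := if p = 0 then Q x₁ else -Q x₁ with hlamdef
    set s : ℕ := if p = 0 then n + 1 else p with hsdef
    have hlamne : lam ≠ 0 := by
      rw [hlamdef]; split <;> simpa using hQx1ne
    have hs1 : 1 ≤ s := by rw [hsdef]; split <;> omega
    have hs2 : s ≤ n + 1 := by rw [hsdef]; split <;> omega
    have hcoef : ∀ i : Fin n, lam * (if (i : ℕ) < s then (1:ℝ) else -1) = w (σ i) := by
      intro i
      by_cases hp0 : p = 0
      · have hi : ¬ P (σ i) := by rw [hσ i]; omega
        have hwi : w (σ i) = Q x₁ := (hwv (σ i)).resolve_right hi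
        have hlt : (i : ℕ) < n + 1 := by omega
        rw [hlamdef, hsdef, if_pos hp0, if_pos hp0, hwi, if_pos hlt, mul_one]
      · rw [hlamdef, hsdef, if_neg hp0, if_neg hp0]
        by_cases hip : (i : ℕ) < p
        · have hPi : P (σ i) := (hσ i).mpr hip
          have hwi : w (σ i) = -Q x₁ := hPi
          rw [hwi, if_pos hip, mul_one]
        · have hnp : ¬ P (σ i) := fun hc => hip ((hσ i).mp hc)
          have hwi : w (σ i) = Q x₁ := (hwv (σ i)).resolve_right hnp
          rw [hwi, if_neg hip]; ring
    have hlast : lam * (if n < s then (1:ℝ) else -1) = Q x₁ := by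
      by_cases hp0 : p = 0
      · rw [hlamdef, hsdef, if_pos hp0, if_pos hp0, if_pos (Nat.lt_succ_self n), mul_one]
      · rw [hlamdef, hsdef, if_neg hp0, if_neg hp0, if_neg (by omega : ¬ n < p)]; ring
    set E : (Fin n → ℝ) ≃ₗ[ℝ] (Fin n → ℝ) :=
      LinearEquiv.funCongrLeft ℝ ℝ (σ.symm : Fin n ≃ Fin n) with hE
    have hEapp : ∀ (u : Fin n → ℝ) (i : Fin n), E u i = u (σ.symm i) := fun u i => rfl
    set T : (↥(LinearMap.ker L) × ℝ) →ₗ[ℝ] (Fin (n+1) → ℝ) :=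
      LinearMap.coprod (LinearMap.ker L).subtype (LinearMap.toSpanSingleton ℝ _ x₁) with hT
    have hTapp : ∀ (v : ↥(LinearMap.ker L)) (t : ℝ), T (v, t) = ↑v + t • x₁ :=
      fun v t => rfl
    have hTbij : Function.Bijective T := by
      constructor
      · rw [injective_iff_map_eq_zero]
        rintro ⟨v, t⟩ hvt
        rw [hTapp] at hvt
        have h1 : L (↑v + t • x₁) = 0 := by rw [hvt, map_zero]
        rw [_root_.map_add, _root_.map_smul, smul_eq_mul, LinearMap.mem_ker.mp v.2, zero_add] at h1
        have ht : t = 0 := by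
          rcases mul_eq_zero.mp h1 with h | h
          · exact h
          · exact absurd h hLx1
        have hv : (v : Fin (n+1) → ℝ) = 0 := by
          rw [ht, zero_smul, add_zero] at hvt; exact hvt
        rw [Prod.mk_eq_zero]
        exact ⟨Subtype.ext hv, ht⟩
      · intro y
        obtain ⟨b, t, rfl⟩ := decomp y
        exact ⟨(κ b, t), rfl⟩
    set Ssum := LinearEquiv.ofBijective T hTbij with hSsum
    set G : (Fin n → ℝ) ≃ₗ[ℝ] ↥(LinearMap.ker L) := (E ≪≫ₗ F) ≪≫ₗ κ with hG
    set H := (splitLast n) ≪≫ₗ ((G.prodCongr (LinearEquiv.refl ℝ ℝ)) ≪≫ₗ Ssum) with hH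
    have hHapp : ∀ y, H y = ι (F (E (Fin.init y))) + (y (Fin.last n)) • x₁ :=
      fun y => rfl
    have hkey : ∀ y, Q (H y) = lam * canQI (n+1) s y ∧ L (H y) = (L x₁) * canL (n+1) y := by
      intro y
      have hHy : H y = ι (F (E (Fin.init y))) + (y (Fin.last n)) • x₁ := hHapp y
      set a : Fin n → ℝ := F (E (Fin.init y)) with ha
      set t : ℝ := y (Fin.last n) with htdef
      constructor
      · rw [hHy]
        have e1 : Q (ι a + t • x₁) = Q (ι a) + Q (t • x₁) + polar ⇑Q (ι a) (t • x₁) := by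
          simp only [polar]; ring
        have e2 : polar ⇑Q (ι a) (t • x₁) = 0 := by
          rw [QuadraticMap.polar_smul_right, polar_comm, hker1 (ι a) (hιker a), smul_zero]
        have e3 : Q (t • x₁) = t ^ 2 * Q x₁ := by
          rw [QuadraticMap.map_smul, smul_eq_mul]; ring
        have e4 : Q (ι a) = ∑ j : Fin n, w (σ j) * (Fin.init y j) ^ 2 := by
          rw [← hQI, ha, hF]
          calc ∑ i : Fin n, w i * (E (Fin.init y) i) ^ 2
              = ∑ i : Fin n, w i * (Fin.init y (σ.symm i)) ^ 2 :=
                Finset.sum_congr rfl fun i _ => by rw [hEapp]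
            _ = ∑ j : Fin n, w (σ j) * (Fin.init y j) ^ 2 := by
                refine (Fintype.sum_equiv σ _ _ fun j => ?_).symm
                rw [Equiv.symm_apply_apply]
        have e5 : canQI (n+1) s y
            = (∑ j : Fin n, (if (j : ℕ) < s then (1:ℝ) else -1) * (Fin.init y j) ^ 2)
              + (if n < s then (1:ℝ) else -1) * t ^ 2 := by
          simp only [canQI]
          rw [Fin.sum_univ_castSucc]
          simp [Fin.init, htdef]
        rw [e1, e2, e3, e4, e5, add_zero, mul_add, Finset.mul_sum]
        congr 1
        · refine Finset.sum_congr rfl fun j _ => ?_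
          rw [← hcoef j]; ring
        · rw [← hlast]; ring
      · rw [hHy, _root_.map_add, _root_.map_smul, hιker a, smul_eq_mul, zero_add, canL_eq, ← htdef]
        ring
    refine ⟨s, hs1, hs2, lam, L x₁, H.symm, hlamne, hLx1, fun x => ?_⟩
    have h := hkey (H.symm x)
    rwa [H.apply_symm_apply] at h
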